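/- The interior A° of a Rees algebra A, defined degreewise by A°_0 = O_W, A°_1 = A_1, and for i>1, A°_i = { f ∈ A_i : Δ(f) ⊆ A°_{i-1} }, is the largest Villamayor algebra contained in A; equivalently it equals the Villamayor algebra generated by all Villamayor algebras B ⊆ A. -/
import Mathlib

/-- `Δ(I)`: the ideal generated by `I` together with all first-order derivatives
of sections of `I` (over the base `k`). -/
noncomputable def deltaIdeal (k : Type*) {R : Type*} [CommRing k] [CommRing R] [Algebra k R]
    (I : Ideal R) : Ideal R :=
  I ⊔ Ideal.span {x | ∃ (D : Derivation k R R) (a : R), a ∈ I ∧ D a = x}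

/-- A Villamayor algebra: a Rees algebra `A` with `A 0 = ⊤` and
`Δ(A_{i+1}) ⊆ A_i` for all `i ≥ 0`. -/
def IsVillamayor (k : Type*) {R : Type*} [CommRing k] [CommRing R] [Algebra k R]
    (A : ℕ → Ideal R) : Prop :=
  A 0 = ⊤ ∧ (∀ i j, A i * A j ≤ A (i + j)) ∧ ∀ i : ℕ, deltaIdeal k (A (i + 1)) ≤ A i

section Aux

variable (k : Type*) {R : Type*} [CommRing k] [CommRing R] [Algebra k R]

lemma deltaIdeal_le_iff {J K : Ideal R} :
    deltaIdeal k J ≤ K ↔ J ≤ K ∧ ∀ (D : Derivation k R R) (a : R), a ∈ J → D a ∈ K := by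
  constructor
  · intro h
    refine ⟨le_trans le_sup_left h, fun D a ha => h ?_⟩
    exact Submodule.mem_sup_right (Ideal.subset_span ⟨D, a, ha, rfl⟩)
  · rintro ⟨h1, h2⟩
    refine sup_le h1 ?_
    rw [Ideal.span_le]
    rintro x ⟨D, a, ha, rfl⟩
    exact h2 D a ha

lemma deltaIdeal_span_singleton_le_iff {f : R} {K : Ideal R} :
    deltaIdeal k (Ideal.span {f}) ≤ K ↔ f ∈ K ∧ ∀ D : Derivation k R R, D f ∈ K := by
  rw [deltaIdeal_le_iff]
  constructor
  · rintro ⟨h1, h2⟩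
    exact ⟨h1 (Ideal.mem_span_singleton_self f), fun D => h2 D f (Ideal.mem_span_singleton_self f)⟩
  · rintro ⟨hf, hD⟩
    constructor
    · rwa [Ideal.span_le, Set.singleton_subset_iff]
    · intro D a ha
      obtain ⟨c, rfl⟩ := Ideal.mem_span_singleton.mp ha
      rw [Derivation.leibniz, smul_eq_mul, smul_eq_mul]
      exact K.add_mem (Ideal.mul_mem_right _ _ hf) (Ideal.mul_mem_left _ _ (hD D))

lemma deltaIdeal_mono {J J' : Ideal R} (h : J ≤ J') : deltaIdeal k J ≤ deltaIdeal k J' := by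
  rw [deltaIdeal_le_iff]
  refine ⟨le_trans h le_sup_left, fun D a ha =>
    Submodule.mem_sup_right (Ideal.subset_span ⟨D, a, h ha, rfl⟩)⟩

/-- The degree-`i` piece for `i ≥ 2`: elements of `J` whose `Δ` lands in `K`. -/
noncomputable def nextIdeal (J K : Ideal R) : Ideal R where
  carrier := {f | f ∈ J ∧ deltaIdeal k (Ideal.span {f}) ≤ K}
  zero_mem' := by
    refine ⟨J.zero_mem, (deltaIdeal_span_singleton_le_iff k).mpr ⟨K.zero_mem, fun D => ?_⟩⟩
    simp
  add_mem' := by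
    rintro a b ⟨haJ, haK⟩ ⟨hbJ, hbK⟩
    replace haK := (deltaIdeal_span_singleton_le_iff k).mp haK
    replace hbK := (deltaIdeal_span_singleton_le_iff k).mp hbK
    exact ⟨J.add_mem haJ hbJ, (deltaIdeal_span_singleton_le_iff k).mpr
      ⟨K.add_mem haK.1 hbK.1, fun D => by
        rw [map_add]; exact K.add_mem (haK.2 D) (hbK.2 D)⟩⟩
  smul_mem' := by
    rintro c f ⟨hfJ, hfK⟩
    replace hfK := (deltaIdeal_span_singleton_le_iff k).mp hfK
    refine ⟨by rw [smul_eq_mul]; exact Ideal.mul_mem_left _ _ hfJ,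
      (deltaIdeal_span_singleton_le_iff k).mpr
        ⟨by rw [smul_eq_mul]; exact Ideal.mul_mem_left _ _ hfK.1, fun D => ?_⟩⟩
    rw [smul_eq_mul, Derivation.leibniz, smul_eq_mul, smul_eq_mul]
    exact K.add_mem (Ideal.mul_mem_left _ _ (hfK.2 D)) (Ideal.mul_mem_right _ _ hfK.1)

/-- The interior algebra of `A`. -/
noncomputable def interiorAux (A : ℕ → Ideal R) : ℕ → Ideal R
  | 0 => ⊤
  | 1 => A 1
  | (n + 2) => nextIdeal k (A (n + 2)) (interiorAux A (n + 1))

variable (A : ℕ → Ideal R)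

lemma interiorAux_le (hA0 : A 0 = ⊤) : ∀ i, interiorAux k A i ≤ A i
  | 0 => by rw [hA0]; exact le_top
  | 1 => le_rfl
  | (n + 2) => fun f hf => hf.1

lemma interiorAux_delta : ∀ i, deltaIdeal k (interiorAux k A (i + 1)) ≤ interiorAux k A i
  | 0 => le_top
  | (n + 1) => by
    rw [deltaIdeal_le_iff]
    constructor
    · rintro f ⟨_, hf⟩
      exact ((deltaIdeal_span_singleton_le_iff k).mp hf).1
    · rintro D a ⟨_, ha⟩
      exact ((deltaIdeal_span_singleton_le_iff k).mp ha).2 D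

lemma interiorAux_antitone : ∀ i, interiorAux k A (i + 1) ≤ interiorAux k A i := by
  intro i
  have := interiorAux_delta k A i
  exact le_trans le_sup_left this

lemma interiorAux_mul (hA0 : A 0 = ⊤) (hAmul : ∀ i j, A i * A j ≤ A (i + j)) :
    ∀ i j, interiorAux k A i * interiorAux k A j ≤ interiorAux k A (i + j) := by
  suffices h : ∀ n i j, i + j = n → ∀ f ∈ interiorAux k A i, ∀ g ∈ interiorAux k A j,
      f * g ∈ interiorAux k A (i + j) by
    intro i j
    exact Submodule.mul_le.mpr (h (i + j) i j rfl)
  intro n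
  induction n using Nat.strong_induction_on with
  | _ n ih =>
    intro i j hn f hf g hg
    match i, j with
    | 0, j => simpa using Ideal.mul_mem_left _ f hg
    | (i + 1), 0 => exact Ideal.mul_mem_right _ _ hf
    | (i + 1), (j + 1) =>
      have hij : i + 1 + (j + 1) = i + j + 2 := by omega
      rw [hij]
      have hfA : f ∈ A (i + 1) := interiorAux_le k A hA0 _ hf
      have hgA : g ∈ A (j + 1) := interiorAux_le k A hA0 _ hg
      refine ⟨?_, ?_⟩
      · have := hAmul (i + 1) (j + 1) (Ideal.mul_mem_mul hfA hgA)
        rwa [hij] at this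
      · rw [deltaIdeal_span_singleton_le_iff]
        have hf' : f ∈ interiorAux k A i := interiorAux_antitone k A i hf
        have hg' : g ∈ interiorAux k A j := interiorAux_antitone k A j hg
        have hDf : ∀ D : Derivation k R R, D f ∈ interiorAux k A i := by
          intro D
          exact interiorAux_delta k A i
            (Submodule.mem_sup_right (Ideal.subset_span ⟨D, f, hf, rfl⟩))
        have hDg : ∀ D : Derivation k R R, D g ∈ interiorAux k A j := by
          intro D
          exact interiorAux_delta k A j
            (Submodule.mem_sup_right (Ideal.subset_span ⟨D, g, hg, rfl⟩))
        constructor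
        · have : f * g ∈ interiorAux k A (i + (j + 1)) :=
            ih (i + (j + 1)) (by omega) i (j + 1) rfl f hf' g hg
          have heq : i + (j + 1) = i + j + 1 := by omega
          rwa [heq] at this
        · intro D
          rw [Derivation.leibniz, smul_eq_mul, smul_eq_mul]
          refine (interiorAux k A (i + j + 1)).add_mem ?_ ?_
          · have : f * D g ∈ interiorAux k A (i + 1 + j) :=
              ih (i + 1 + j) (by omega) (i + 1) j rfl f hf (D g) (hDg D)
            have heq : i + 1 + j = i + j + 1 := by omega
            rwa [heq] at this
          · have : g * D f ∈ interiorAux k A (j + 1 + i) :=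
              ih (j + 1 + i) (by omega) (j + 1) i rfl g hg (D f) (hDf D)
            have heq : j + 1 + i = i + j + 1 := by omega
            rwa [heq] at this

end Aux

theorem interior_of_rees_algebra {k R : Type*} [Field k] [CharZero k] [CommRing R] [Algebra k R]
    (A : ℕ → Ideal R) (hA0 : A 0 = ⊤) (hAmul : ∀ i j, A i * A j ≤ A (i + j)) :
    ∃ B : ℕ → Ideal R,
      IsVillamayor k B ∧ (∀ i, B i ≤ A i) ∧
      -- B is the largest Villamayor algebra contained in A
      (∀ C : ℕ → Ideal R, IsVillamayor k C → (∀ i, C i ≤ A i) → ∀ i, C i ≤ B i) ∧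
      -- degreewise characterization
      B 0 = ⊤ ∧ B 1 = A 1 ∧
      (∀ i : ℕ, 2 ≤ i →
        (B i : Set R) = {f | f ∈ A i ∧ deltaIdeal k (Ideal.span {f}) ≤ B (i - 1)}) := by
  refine ⟨interiorAux k A, ⟨rfl, interiorAux_mul k A hA0 hAmul, interiorAux_delta k A⟩,
    interiorAux_le k A hA0, ?_, rfl, rfl, ?_⟩
  · intro C hC hCA i
    induction i using Nat.strong_induction_on with
    | _ i ih =>
      match i with
      | 0 => rw [hC.1]; exact le_of_eq rfl
      | 1 => exact hCA 1
      | (n + 2) =>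
        intro f hf
        refine ⟨hCA _ hf, ?_⟩
        calc deltaIdeal k (Ideal.span {f}) ≤ deltaIdeal k (C (n + 2)) := by
              apply deltaIdeal_mono
              rwa [Ideal.span_le, Set.singleton_subset_iff]
          _ ≤ C (n + 1) := hC.2.2 (n + 1)
          _ ≤ interiorAux k A (n + 1) := ih (n + 1) (by omega)
  · intro i hi
    match i with
    | (n + 2) => rfl
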